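/- For each natural number r, the asymptotic stability region R_AS^r = {z ∈ ℂ : ∫₀¹ ln |f_{r,z}(t)| dt < 0} is bounded, where f_{r,z}(t) = Σ_{j=0}^{r+1} z^j/j! + t^{r+1} z^{r+2}/(r+1)!. -/

import Mathlib

open MeasureTheory Finset

noncomputable def fT (r : ℕ) (z : ℂ) (t : ℝ) : ℂ :=
  (∑ j ∈ Finset.range (r + 2), z ^ j / (j.factorial : ℂ)) +
    (t : ℂ) ^ (r + 1) * z ^ (r + 2) / ((r + 1).factorial : ℂ)

noncomputable def Fms (r : ℕ) (z : ℂ) : ℝ :=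
  ∫ t in (0:ℝ)..1, ‖fT r z t‖ ^ 2

noncomputable def Gas (r : ℕ) (z : ℂ) : ℝ :=
  ∫ t in (0:ℝ)..1, Real.log (‖fT r z t‖)

namespace Stmt12Aux

lemma hrpow_neg_zero {x : ℝ} (hx : x < 0) : x ^ (-(1/2) : ℝ) = 0 := by
  rw [Real.rpow_def_of_neg hx]
  have : Real.cos (-(1/2) * Real.pi) = 0 := by
    rw [show (-(1/2) : ℝ) * Real.pi = -(Real.pi/2) by ring, Real.cos_neg, Real.cos_pi_div_two]
  rw [this, mul_zero]

lemma hrpow_half_neg_zero {x : ℝ} (hx : x < 0) : x ^ ((1/2) : ℝ) = 0 := by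
  rw [Real.rpow_def_of_neg hx]
  have : Real.cos ((1/2) * Real.pi) = 0 := by
    rw [show ((1/2) : ℝ) * Real.pi = Real.pi/2 by ring, Real.cos_pi_div_two]
  rw [this, mul_zero]

lemma half_rpow_nonneg (x : ℝ) : 0 ≤ x ^ ((1/2) : ℝ) := by
  rcases lt_or_ge x 0 with h | h
  · rw [hrpow_half_neg_zero h]
  · exact Real.rpow_nonneg h _

lemma half_rpow_le_one {x : ℝ} (hx : x ≤ 1) : x ^ ((1/2) : ℝ) ≤ 1 := by
  rcases lt_or_ge x 0 with h | h
  · rw [hrpow_half_neg_zero h]; norm_num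
  · exact Real.rpow_le_one h hx (by norm_num)

lemma half_rpow_sub (x : ℝ) : x ^ ((1/2) : ℝ) ≤ 1 + (x - 1) ^ ((1/2) : ℝ) := by
  rcases le_or_gt x 1 with h | h
  · have := half_rpow_nonneg (x - 1)
    have := half_rpow_le_one h
    linarith
  · have h0 : (0:ℝ) ≤ x := by linarith
    have h1 : (0:ℝ) ≤ x - 1 := by linarith
    rw [← Real.sqrt_eq_rpow, ← Real.sqrt_eq_rpow]
    nlinarith [Real.sq_sqrt h0, Real.sq_sqrt h1, Real.sqrt_nonneg x, Real.sqrt_nonneg (x-1)]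

lemma abs_rpow_split (u : ℝ) :
    |u| ^ (-(1/2) : ℝ) = u ^ (-(1/2) : ℝ) + (-u) ^ (-(1/2) : ℝ) := by
  rcases lt_trichotomy u 0 with h | h | h
  · rw [abs_of_neg h, hrpow_neg_zero h, zero_add]
  · subst h; norm_num
  · rw [abs_of_pos h, hrpow_neg_zero (by linarith : -u < 0), add_zero]

lemma log_ge_rpow {x : ℝ} (hx : 0 < x) : 2 - 2 * x ^ (-(1/2) : ℝ) ≤ Real.log x := by
  have h1 := Real.log_le_sub_one_of_pos (Real.rpow_pos_of_pos hx (-(1/2)))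
  rw [Real.log_rpow hx] at h1
  linarith

lemma I3val : ∫ t in (0:ℝ)..1, t ^ (-(1/2) : ℝ) = 2 := by
  rw [integral_rpow (Or.inl (by norm_num))]
  norm_num

lemma hi1int (b : ℝ) : IntervalIntegrable (fun t : ℝ => (t - b) ^ (-(1/2) : ℝ)) volume 0 1 := by
  have h := (intervalIntegral.intervalIntegrable_rpow' (a := -b) (b := 1 - b)
      (by norm_num : (-1:ℝ) < -(1/2))).comp_sub_right b
  simpa using h

lemma hi2int (b : ℝ) : IntervalIntegrable (fun t : ℝ => (b - t) ^ (-(1/2) : ℝ)) volume 0 1 := by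
  have h := (intervalIntegral.intervalIntegrable_rpow' (a := b) (b := b - 1)
      (by norm_num : (-1:ℝ) < -(1/2))).comp_sub_left b
  simpa using h

lemma I1le (b : ℝ) (hb : 0 ≤ b) : ∫ t in (0:ℝ)..1, (t - b) ^ (-(1/2) : ℝ) ≤ 2 := by
  rw [intervalIntegral.integral_comp_sub_right (fun u : ℝ => u ^ (-(1/2) : ℝ)) b,
    integral_rpow (Or.inl (by norm_num : (-1:ℝ) < -(1/2))),
    show (-(1/2) + 1 : ℝ) = 1/2 by norm_num]
  have h1 : (1 - b) ^ ((1/2) : ℝ) ≤ 1 := half_rpow_le_one (by linarith)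
  have h2 : 0 ≤ (0 - b) ^ ((1/2) : ℝ) := half_rpow_nonneg _
  rw [div_le_iff₀ (by norm_num : (0:ℝ) < 1/2)]
  linarith

lemma I2le (b : ℝ) : ∫ t in (0:ℝ)..1, (b - t) ^ (-(1/2) : ℝ) ≤ 2 := by
  rw [intervalIntegral.integral_comp_sub_left (fun u : ℝ => u ^ (-(1/2) : ℝ)) b,
    integral_rpow (Or.inl (by norm_num : (-1:ℝ) < -(1/2))),
    show (-(1/2) + 1 : ℝ) = 1/2 by norm_num]
  have h1 := half_rpow_sub b
  rw [div_le_iff₀ (by norm_num : (0:ℝ) < 1/2)]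
  have h2 : (b - 0 : ℝ) = b := by ring
  rw [h2]
  linarith

lemma fT_lower (r : ℕ) (z : ℂ) (hz : z ≠ 0) :
    ∃ b : ℝ, 0 ≤ b ∧ ∀ t ∈ Set.Ioo (0:ℝ) 1,
      (‖z‖) ^ (r + 2) / ((r + 1).factorial : ℝ) * (|t - b| * t ^ r)
        ≤ ‖fT r z t‖ := by
  set S : ℂ := ∑ j ∈ Finset.range (r + 2), z ^ j / (j.factorial : ℂ) with hS
  set c : ℂ := z ^ (r + 2) / ((r + 1).factorial : ℂ) with hc
  have hfac : ((r + 1).factorial : ℂ) ≠ 0 := Nat.cast_ne_zero.2 (Nat.factorial_ne_zero _)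
  have hcne : c ≠ 0 := div_ne_zero (pow_ne_zero _ hz) hfac
  set w : ℂ := -(S / c) with hw
  set a : ℝ := ‖w‖ with ha
  have ha0 : 0 ≤ a := norm_nonneg w
  set b : ℝ := a ^ ((1 : ℝ) / (r + 1)) with hb
  have hb0 : 0 ≤ b := Real.rpow_nonneg ha0 _
  have hbp : b ^ (r + 1) = a := by
    rw [hb, ← Real.rpow_natCast (a ^ ((1:ℝ)/(r+1))) (r+1), ← Real.rpow_mul ha0]
    rw [show ((1:ℝ)/(r+1)) * ((r+1 : ℕ) : ℝ) = 1 by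
      push_cast; field_simp]
    exact Real.rpow_one a
  refine ⟨b, hb0, fun t ht => ?_⟩
  have ht0 : 0 < t := ht.1
  have h1 : fT r z t = c * ((t : ℂ) ^ (r + 1) - w) := by
    rw [hw, mul_sub, mul_neg, show c * (S / c) = S by field_simp, sub_neg_eq_add]
    simp only [fT, hS, hc]
    ring
  have h2 : ‖fT r z t‖
      = ‖z‖ ^ (r + 2) / ((r + 1).factorial : ℝ) * ‖(t:ℂ) ^ (r+1) - w‖ := by
    rw [h1, norm_mul, hc, norm_div, norm_pow, Complex.norm_natCast]
  rw [h2]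
  have hK : 0 ≤ ‖z‖ ^ (r + 2) / ((r + 1).factorial : ℝ) := by positivity
  refine mul_le_mul_of_nonneg_left ?_ hK
  have h3 : |t ^ (r + 1) - a| ≤ ‖(t:ℂ) ^ (r+1) - w‖ := by
    have := abs_norm_sub_norm_le ((t:ℂ) ^ (r+1)) w
    rwa [norm_pow, Complex.norm_real, Real.norm_eq_abs, abs_of_pos ht0, ← ha] at this
  refine le_trans ?_ h3
  have hg := geom_sum₂_mul t b (r + 1)
  simp only [Nat.add_sub_cancel] at hg
  have h4 : t ^ (r + 1) - a = (t - b) * ∑ i ∈ range (r + 1), t ^ i * b ^ (r - i) := by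
    rw [← hbp, ← hg]; ring
  have hsum0 : (0:ℝ) ≤ ∑ i ∈ range (r + 1), t ^ i * b ^ (r - i) :=
    Finset.sum_nonneg fun i _ => mul_nonneg (pow_nonneg ht0.le _) (pow_nonneg hb0 _)
  have hsum : t ^ r ≤ ∑ i ∈ range (r + 1), t ^ i * b ^ (r - i) := by
    have := Finset.single_le_sum (f := fun i => t ^ i * b ^ (r - i))
      (fun i _ => mul_nonneg (pow_nonneg ht0.le _) (pow_nonneg hb0 _))
      (Finset.self_mem_range_succ r)
    simpa using this
  calc |t - b| * t ^ r ≤ |t - b| * ∑ i ∈ range (r + 1), t ^ i * b ^ (r - i) :=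
        mul_le_mul_of_nonneg_left hsum (abs_nonneg _)
    _ = |t ^ (r + 1) - a| := by
        rw [h4, abs_mul, abs_of_nonneg hsum0]

end Stmt12Aux

open Stmt12Aux in
theorem stmt12 (r : ℕ) :
    ∃ γ > (0 : ℝ), ∀ z : ℂ, Gas r z < 0 → ‖z‖ < γ := by
  set γ : ℝ := ((r + 1).factorial : ℝ) * Real.exp (2 * r + 6) with hγdef
  have hγ1 : 1 ≤ γ := by
    have h1 : (1:ℝ) ≤ ((r + 1).factorial : ℝ) := by
      exact_mod_cast Nat.one_le_iff_ne_zero.2 (Nat.factorial_ne_zero _)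
    have h2 : (1:ℝ) ≤ Real.exp (2 * r + 6) := Real.one_le_exp (by positivity)
    nlinarith
  refine ⟨γ, by linarith, fun z hG => ?_⟩
  by_contra hzγ
  push_neg at hzγ
  have hz1 : 1 ≤ ‖z‖ := le_trans hγ1 hzγ
  have hz : z ≠ 0 := by
    intro h
    rw [h, norm_zero] at hz1
    linarith
  obtain ⟨b, hb0, hfb⟩ := fT_lower r z hz
  set K : ℝ := ‖z‖ ^ (r + 2) / ((r + 1).factorial : ℝ) with hKdef
  have hfacpos : (0:ℝ) < ((r + 1).factorial : ℝ) := by exact_mod_cast (r+1).factorial_pos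
  have hKpos : 0 < K := by positivity
  set L : ℝ := Real.log K with hLdef
  have hL : 2 * r + 6 ≤ L := by
    have hzp : γ ≤ ‖z‖ ^ (r + 2) :=
      le_trans hzγ (le_self_pow₀ hz1 (by omega))
    have h1 : Real.exp (2 * r + 6) ≤ K := by
      rw [hKdef]
      rw [le_div_iff₀ hfacpos]
      calc Real.exp (2 * r + 6) * ((r + 1).factorial : ℝ) = γ := by rw [hγdef]; ring
        _ ≤ ‖z‖ ^ (r + 2) := hzp
    calc (2 * r + 6 : ℝ) = Real.log (Real.exp (2 * r + 6)) := (Real.log_exp _).symm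
      _ ≤ L := Real.log_le_log (Real.exp_pos _) h1
  set g : ℝ → ℝ := fun t =>
    (L + 2 + 2 * r) - (2 * (t - b) ^ (-(1/2) : ℝ) + 2 * (b - t) ^ (-(1/2) : ℝ)
      + (2 * r) * t ^ (-(1/2) : ℝ)) with hgdef
  have hi1 := hi1int b
  have hi2 := hi2int b
  have hi3 : IntervalIntegrable (fun t : ℝ => t ^ (-(1/2) : ℝ)) volume 0 1 :=
    intervalIntegral.intervalIntegrable_rpow' (by norm_num)
  have higsub : IntervalIntegrable (fun t : ℝ => 2 * (t - b) ^ (-(1/2) : ℝ)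
      + 2 * (b - t) ^ (-(1/2) : ℝ) + (2 * r) * t ^ (-(1/2) : ℝ)) volume 0 1 :=
    ((hi1.const_mul 2).add (hi2.const_mul 2)).add (hi3.const_mul (2 * r))
  have hig : IntervalIntegrable g volume 0 1 :=
    (intervalIntegrable_const (c := L + 2 + 2 * r)).sub higsub
  have key : ∀ t ∈ Set.Ioo (0:ℝ) 1, t ≠ b → g t ≤ Real.log (‖fT r z t‖) := by
    intro t ht htb
    have ht0 : 0 < t := ht.1
    have habs := hfb t ht
    have htbpos : 0 < |t - b| := abs_pos.2 (sub_ne_zero.2 htb)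
    have hpos : 0 < K * (|t - b| * t ^ r) :=
      mul_pos hKpos (mul_pos htbpos (pow_pos ht0 r))
    have hlog := Real.log_le_log hpos habs
    rw [Real.log_mul hKpos.ne' (mul_pos htbpos (pow_pos ht0 r)).ne',
      Real.log_mul htbpos.ne' (pow_pos ht0 r).ne', Real.log_pow] at hlog
    have l1 : 2 - 2 * |t - b| ^ (-(1/2) : ℝ) ≤ Real.log |t - b| := log_ge_rpow htbpos
    have l2 : 2 - 2 * t ^ (-(1/2) : ℝ) ≤ Real.log t := log_ge_rpow ht0
    have l2' : (r:ℝ) * (2 - 2 * t ^ (-(1/2) : ℝ)) ≤ (r:ℝ) * Real.log t :=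
      mul_le_mul_of_nonneg_left l2 (Nat.cast_nonneg r)
    have hsplit : |t - b| ^ (-(1/2) : ℝ)
        = (t - b) ^ (-(1/2) : ℝ) + (b - t) ^ (-(1/2) : ℝ) := by
      have := abs_rpow_split (t - b)
      rwa [show -(t - b) = b - t by ring] at this
    rw [hgdef]
    simp only
    rw [← hLdef] at hlog
    nlinarith [hlog, l1, l2']
  have hbadset : ({0, 1, b} : Set ℝ).Countable :=
    (Set.toFinite _).countable
  have hbad : ∀ᵐ t ∂(volume : Measure ℝ), t ∉ ({0, 1, b} : Set ℝ) :=
    hbadset.ae_notMem _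
  have hae : (fun t => g t)
      ≤ᵐ[(volume : Measure ℝ).restrict (Set.Icc 0 1)]
        (fun t => Real.log (‖fT r z t‖)) := by
    refine (MeasureTheory.ae_restrict_of_ae hbad).mp
      ((MeasureTheory.ae_restrict_mem measurableSet_Icc).mono ?_)
    intro t htIcc htn
    simp only [Set.mem_insert_iff, Set.mem_singleton_iff, not_or] at htn
    exact key t ⟨lt_of_le_of_ne htIcc.1 (Ne.symm htn.1), lt_of_le_of_ne htIcc.2 htn.2.1⟩ htn.2.2
  by_cases hF : IntervalIntegrable (fun t => Real.log (‖fT r z t‖)) volume 0 1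
  · have hmono := intervalIntegral.integral_mono_ae_restrict (zero_le_one) hig hF hae
    have hintg : ∫ t in (0:ℝ)..1, g t
        = (L + 2 + 2 * r)
          - ((2 * ∫ t in (0:ℝ)..1, (t - b) ^ (-(1/2) : ℝ))
            + (2 * ∫ t in (0:ℝ)..1, (b - t) ^ (-(1/2) : ℝ))
            + ((2 * r) * ∫ t in (0:ℝ)..1, t ^ (-(1/2) : ℝ))) := by
      rw [hgdef]
      rw [intervalIntegral.integral_sub (intervalIntegrable_const) higsub,
        intervalIntegral.integral_const,
        intervalIntegral.integral_add ((hi1.const_mul 2).add (hi2.const_mul 2))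
          (hi3.const_mul (2 * r)),
        intervalIntegral.integral_add (hi1.const_mul 2) (hi2.const_mul 2),
        intervalIntegral.integral_const_mul, intervalIntegral.integral_const_mul,
        intervalIntegral.integral_const_mul]
      norm_num
    have hI1 := I1le b hb0
    have hI2 := I2le b
    have hI3 := I3val
    have hGas : Gas r z = ∫ t in (0:ℝ)..1, Real.log (‖fT r z t‖) := rfl
    rw [hGas] at hG
    rw [hintg, hI3] at hmono
    have hr0 : (0:ℝ) ≤ (r:ℝ) := Nat.cast_nonneg r
    nlinarith [hmono, hG, hI1, hI2, hL]
  · have h0 : Gas r z = 0 := intervalIntegral.integral_undef hF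
    rw [h0] at hG
    exact lt_irrefl _ hG
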